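/- For all integers k ≥ 2 and n ≥ 1, the packing chromatic numbers of consecutive Sierpiński graphs satisfy χρ(S^{n+1}_k) ≥ χρ(S^n_k) + (k − 1)·(χρ(S^n_k) − 2^{n+1} + 2) (equivalently, χρ(S^{n+1}_k) ≥ k·χρ(S^n_k) − (k − 1)·(2^{n+1} − 2)). -/

import Mathlib

/-- The generalized Sierpiński graph `S^n_G` of a base graph `G` on the vertex set
`[k]_0 = {0, …, k−1}`: the vertices are the words of length `n` over `[k]_0`, and two
distinct words `u, v` are adjacent iff there is an index `i` with `u j = v j` for `j < i`,
`u i` adjacent to `v i` in `G`, and `u j = v i`, `v j = u i` for all `j > i`. -/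
def genSierpinski {k : ℕ} (G : SimpleGraph (Fin k)) (n : ℕ) :
    SimpleGraph (Fin n → Fin k) where
  Adj u v := ∃ i : Fin n,
    (∀ j, j < i → u j = v j) ∧ G.Adj (u i) (v i) ∧ ∀ j, i < j → u j = v i ∧ v j = u i
  symm := by
    constructor
    rintro u v ⟨i, h1, h2, h3⟩
    exact ⟨i, fun j hj => (h1 j hj).symm, h2.symm, fun j hj => ⟨(h3 j hj).2, (h3 j hj).1⟩⟩
  loopless := by
    constructor
    rintro u ⟨i, -, h2, -⟩
    exact G.irrefl h2

/-- The Sierpiński graph `S^n_k`, i.e. the generalized Sierpiński graph of the complete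
graph `K_k` on `[k]_0` (in which two vertices are adjacent iff they are distinct). -/
def sierpinski (k n : ℕ) : SimpleGraph (Fin n → Fin k) :=
  genSierpinski (⊤ : SimpleGraph (Fin k)) n

lemma sierpinski_adj {k n : ℕ} (u v : Fin n → Fin k) :
    (sierpinski k n).Adj u v ↔ ∃ i : Fin n,
      (∀ j, j < i → u j = v j) ∧ u i ≠ v i ∧ ∀ j, i < j → u j = v i ∧ v j = u i := by
  simp only [sierpinski, genSierpinski, SimpleGraph.top_adj]

lemma emb_adj {k n : ℕ} (a : Fin k) {u v : Fin n → Fin k}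
    (h : (sierpinski k n).Adj u v) :
    (sierpinski k (n+1)).Adj (Fin.cons a u) (Fin.cons a v) := by
  rw [sierpinski_adj] at h ⊢
  obtain ⟨i, h1, h2, h3⟩ := h
  refine ⟨i.succ, ?_, ?_, ?_⟩
  · intro j hj
    rcases Fin.eq_zero_or_eq_succ j with rfl | ⟨j', rfl⟩
    · simp
    · simpa [Fin.cons_succ] using h1 j' (by rwa [Fin.succ_lt_succ_iff] at hj)
  · simpa [Fin.cons_succ] using h2
  · intro j hj
    rcases Fin.eq_zero_or_eq_succ j with rfl | ⟨j', rfl⟩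
    · exact absurd hj (by simp)
    · simpa [Fin.cons_succ] using h3 j' (by rwa [Fin.succ_lt_succ_iff] at hj)

def emb {k : ℕ} (a : Fin k) (n : ℕ) : sierpinski k n →g sierpinski k (n+1) where
  toFun := fun u => Fin.cons a u
  map_rel' h := emb_adj a h

lemma emb_apply {k n : ℕ} (a : Fin k) (u : Fin n → Fin k) : (emb a n) u = Fin.cons a u := rfl

/-- Map a walk through the embedding, with endpoints rewritten. -/
def embWalk {k n : ℕ} (a : Fin k) {u v : Fin n → Fin k} (p : (sierpinski k n).Walk u v) :
    (sierpinski k (n+1)).Walk (Fin.cons a u) (Fin.cons a v) :=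
  (p.map (emb a n)).copy (emb_apply a u) (emb_apply a v)

lemma embWalk_length {k n : ℕ} (a : Fin k) {u v : Fin n → Fin k}
    (p : (sierpinski k n).Walk u v) : (embWalk a p).length = p.length := by
  rw [embWalk, SimpleGraph.Walk.length_copy, SimpleGraph.Walk.length_map]

lemma exists_short_walk (k : ℕ) : ∀ (n : ℕ) (u v : Fin n → Fin k),
    ∃ p : (sierpinski k n).Walk u v, p.length + 1 ≤ 2 ^ n := by
  intro n
  induction n with
  | zero =>
    intro u v
    obtain rfl : u = v := Subsingleton.elim u v
    exact ⟨SimpleGraph.Walk.nil, by norm_num⟩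
  | succ n ih =>
    intro u v
    obtain ⟨a, u', rfl⟩ : ∃ a w, u = Fin.cons a w := ⟨u 0, Fin.tail u, (Fin.cons_self_tail u).symm⟩
    obtain ⟨b, v', rfl⟩ : ∃ b w, v = Fin.cons b w := ⟨v 0, Fin.tail v, (Fin.cons_self_tail v).symm⟩
    by_cases hab : a = b
    · subst hab
      obtain ⟨p, hp⟩ := ih u' v'
      refine ⟨embWalk a p, ?_⟩
      rw [embWalk_length]
      have : 2^n ≤ 2^(n+1) := Nat.pow_le_pow_right (by norm_num) (Nat.le_succ n)
      omega
    · obtain ⟨p1, hp1⟩ := ih u' (fun _ => b)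
      obtain ⟨p2, hp2⟩ := ih (fun _ => a) v'
      have hadj : (sierpinski k (n+1)).Adj (Fin.cons a (fun _ => b)) (Fin.cons b (fun _ => a)) := by
        rw [sierpinski_adj]
        refine ⟨0, ?_, ?_, ?_⟩
        · intro j hj; exact absurd hj (by simp)
        · simpa using hab
        · intro j hj
          rcases Fin.eq_zero_or_eq_succ j with rfl | ⟨j', rfl⟩
          · exact absurd hj (lt_irrefl _)
          · simp
      refine ⟨(embWalk a p1).append (SimpleGraph.Walk.cons hadj (embWalk b p2)), ?_⟩
      rw [SimpleGraph.Walk.length_append, SimpleGraph.Walk.length_cons,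
        embWalk_length, embWalk_length]
      have : 2^(n+1) = 2^n + 2^n := by ring
      omega


/-- `c` is a `t`-packing coloring of `G`: every vertex gets a color in `{1, …, t}`, and any
two distinct vertices with the same color `i` are at distance greater than `i`
(equivalently, every walk between them has length greater than `i`). -/
def IsPackingColoring {V : Type*} (G : SimpleGraph V) (t : ℕ) (c : V → ℕ) : Prop :=
  (∀ v, 1 ≤ c v ∧ c v ≤ t) ∧
    ∀ u v, u ≠ v → c u = c v → ∀ p : G.Walk u v, c u < p.length

/-- The packing chromatic number `χρ(G)`: the least `t` such that `G` admits a
`t`-packing coloring. -/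
noncomputable def packingChromatic {V : Type*} (G : SimpleGraph V) : ℕ :=
  sInf {t | ∃ c : V → ℕ, IsPackingColoring G t c}

lemma packing_exists (k n : ℕ) :
    ∃ t c, IsPackingColoring (sierpinski k n) t c := by
  classical
  refine ⟨Fintype.card (Fin n → Fin k), fun v => (Fintype.equivFin _ v : ℕ) + 1, ?_, ?_⟩
  · intro v
    have := (Fintype.equivFin (Fin n → Fin k) v).isLt
    refine ⟨Nat.le_add_left 1 _, ?_⟩
    beta_reduce
    omega
  · intro u v hne heq p
    simp only [Nat.add_right_cancel_iff] at heq
    exact absurd ((Fintype.equivFin _).injective (Fin.ext heq)) hne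

lemma packing_mono {k n t : ℕ} (hk : 1 ≤ k) (c : (Fin (n+1) → Fin k) → ℕ)
    (hc : IsPackingColoring (sierpinski k (n+1)) t c) :
    packingChromatic (sierpinski k n) ≤ t := by
  apply Nat.sInf_le
  refine ⟨fun u => c (Fin.cons ⟨0, hk⟩ u), fun v => hc.1 _, ?_⟩
  intro u v hne heq p
  have := hc.2 _ _ (fun h => hne (Fin.cons_right_injective _ h)) heq (embWalk ⟨0, hk⟩ p)
  rwa [embWalk_length] at this

lemma copy_bound {k n t : ℕ} (hn : 1 ≤ n) (c : (Fin (n+1) → Fin k) → ℕ)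
    (hc : IsPackingColoring (sierpinski k (n+1)) t c) (a : Fin k) :
    packingChromatic (sierpinski k n) + 2 ≤
      2 ^ n + ((Finset.univ.image fun u : Fin n → Fin k => c (Fin.cons a u)).filter
        (fun x => 2 ^ n ≤ x + 1)).card := by
  classical
  set B := ((Finset.univ.image fun u : Fin n → Fin k => c (Fin.cons a u)).filter
    (fun x => 2 ^ n ≤ x + 1)) with hB
  have hmemB : ∀ u : Fin n → Fin k, 2 ^ n ≤ c (Fin.cons a u) + 1 → c (Fin.cons a u) ∈ B := by
    intro u h
    rw [hB, Finset.mem_filter, Finset.mem_image]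
    exact ⟨⟨u, Finset.mem_univ u, rfl⟩, h⟩
  set r : ℕ → ℕ := fun x => (B.filter (· < x)).card with hr
  have hrlt : ∀ x ∈ B, r x + 1 ≤ B.card := by
    intro x hx
    have hsub : B.filter (· < x) ⊆ B.erase x := by
      intro y hy
      rw [Finset.mem_filter] at hy
      exact Finset.mem_erase.2 ⟨Nat.ne_of_lt hy.2, hy.1⟩
    have h2 := Finset.card_le_card hsub
    have h3 := Finset.card_erase_of_mem hx
    have h4 : 1 ≤ B.card := Finset.card_pos.2 ⟨x, hx⟩
    simp only [hr]
    omega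
  have hrmono : ∀ x ∈ B, ∀ y, x < y → r x < r y := by
    intro x hx y hxy
    apply Finset.card_lt_card
    rw [Finset.ssubset_def]
    constructor
    · intro z hz
      rw [Finset.mem_filter] at hz ⊢
      exact ⟨hz.1, hz.2.trans hxy⟩
    · intro hsub
      have := hsub (Finset.mem_filter.2 ⟨hx, hxy⟩)
      rw [Finset.mem_filter] at this
      exact absurd this.2 (lt_irrefl x)
  have hP : 2 ≤ 2 ^ n := by
    calc (2:ℕ) = 2^1 := rfl
    _ ≤ 2^n := Nat.pow_le_pow_right (by norm_num) hn
  set ca : (Fin n → Fin k) → ℕ :=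
    fun u => if c (Fin.cons a u) + 2 ≤ 2 ^ n then c (Fin.cons a u)
      else 2 ^ n - 1 + r (c (Fin.cons a u)) with hca
  have hkey : IsPackingColoring (sierpinski k n) (2 ^ n - 2 + B.card) ca := by
    constructor
    · intro v
      by_cases h : c (Fin.cons a v) + 2 ≤ 2 ^ n
      · simp only [hca, if_pos h]
        have h1 := (hc.1 (Fin.cons a v)).1
        omega
      · simp only [hca, if_neg h]
        have hmem := hmemB v (by omega)
        have := hrlt _ hmem
        omega
    · intro u v huv heq p
      have hneuv : (Fin.cons a u : Fin (n+1) → Fin k) ≠ Fin.cons a v := by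
        intro h
        exact huv (funext fun j => by simpa [Fin.cons_succ] using congrFun h j.succ)
      by_cases h1 : c (Fin.cons a u) + 2 ≤ 2 ^ n <;>
        by_cases h2 : c (Fin.cons a v) + 2 ≤ 2 ^ n
      · simp only [hca, if_pos h1, if_pos h2] at heq ⊢
        have := hc.2 _ _ hneuv heq (embWalk a p)
        rwa [embWalk_length] at this
      · exfalso
        simp only [hca, if_pos h1, if_neg h2] at heq
        have hmem := hmemB v (by omega)
        omega
      · exfalso
        simp only [hca, if_neg h1, if_pos h2] at heq
        have hmem := hmemB u (by omega)
        omega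
      · exfalso
        simp only [hca, if_neg h1, if_neg h2] at heq
        have hmu := hmemB u (by omega)
        have hmv := hmemB v (by omega)
        have hceq : c (Fin.cons a u) = c (Fin.cons a v) := by
          have hre : r (c (Fin.cons a u)) = r (c (Fin.cons a v)) := by omega
          rcases lt_trichotomy (c (Fin.cons a u)) (c (Fin.cons a v)) with h | h | h
          · exact absurd (hrmono _ hmu _ h) (by omega)
          · exact h
          · exact absurd (hrmono _ hmv _ h) (by omega)
        obtain ⟨q, hq⟩ := exists_short_walk k n u v
        have hlen := hc.2 _ _ hneuv hceq (embWalk a q)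
        rw [embWalk_length] at hlen
        omega
  have hle : packingChromatic (sierpinski k n) ≤ 2 ^ n - 2 + B.card :=
    Nat.sInf_le ⟨ca, hkey⟩
  omega

/-- For all `k ≥ 2` and `n ≥ 1`, the packing chromatic numbers of consecutive Sierpiński
graphs satisfy `χρ(S^{n+1}_k) ≥ χρ(S^n_k) + (k − 1)·(χρ(S^n_k) − 2^{n+1} + 2)`. -/
theorem packingChromatic_sierpinski_succ_lower_bound (k n : ℕ) (hk : 2 ≤ k) (hn : 1 ≤ n) :
    (packingChromatic (sierpinski k n) : ℤ) +
        ((k : ℤ) - 1) * ((packingChromatic (sierpinski k n) : ℤ) - 2 ^ (n + 1) + 2) ≤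
      (packingChromatic (sierpinski k (n + 1)) : ℤ) := by
  classical
  set t := packingChromatic (sierpinski k (n+1)) with ht
  have hnonempty : {t | ∃ c, IsPackingColoring (sierpinski k (n+1)) t c}.Nonempty := by
    obtain ⟨t', c', h'⟩ := packing_exists k (n+1)
    exact ⟨t', c', h'⟩
  obtain ⟨c, hc⟩ : ∃ c, IsPackingColoring (sierpinski k (n+1)) t c := Nat.sInf_mem hnonempty
  set X := packingChromatic (sierpinski k n) with hX
  have hXt : X ≤ t := packing_mono (by omega) c hc
  set B : Fin k → Finset ℕ := fun a =>
    (Finset.univ.image fun u : Fin n → Fin k => c (Fin.cons a u)).filter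
      (fun x => 2 ^ n ≤ x + 1) with hBdef
  have hkey : ∀ a, X + 2 ≤ 2 ^ n + (B a).card := fun a => copy_bound hn c hc a
  set Hs : Fin k → Finset ℕ := fun a => (B a).filter (fun x => 2 ^ (n+1) ≤ x + 1) with hHdef
  have hP : 2 ≤ 2 ^ n := by
    calc (2:ℕ) = 2^1 := rfl
    _ ≤ 2^n := Nat.pow_le_pow_right (by norm_num) hn
  have hpow : 2 ^ (n+1) = 2 ^ n + 2 ^ n := by ring
  -- card bound per copy
  have hBcard : ∀ a, (B a).card ≤ (Hs a).card + 2 ^ n := by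
    intro a
    have hsub : B a ⊆ Hs a ∪ Finset.Icc (2^n - 1) (2^(n+1) - 2) := by
      intro x hx
      by_cases hbig : 2 ^ (n+1) ≤ x + 1
      · exact Finset.mem_union_left _ (Finset.mem_filter.2 ⟨hx, hbig⟩)
      · apply Finset.mem_union_right
        simp only [hBdef, Finset.mem_filter] at hx
        exact Finset.mem_Icc.2 ⟨by omega, by omega⟩
    have h1 := Finset.card_le_card hsub
    have h2 := Finset.card_union_le (Hs a) (Finset.Icc (2^n - 1) (2^(n+1) - 2))
    have h3 : (Finset.Icc (2^n - 1) (2^(n+1) - 2)).card = 2^(n+1) - 2 + 1 - (2^n - 1) :=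
      Nat.card_Icc _ _
    omega
  -- disjointness of big-color sets
  have hdisj : ∀ a ∈ Finset.univ, ∀ b ∈ (Finset.univ : Finset (Fin k)), a ≠ b →
      Disjoint (Hs a) (Hs b) := by
    intro a _ b _ hab
    rw [Finset.disjoint_left]
    intro x hxa hxb
    simp only [hHdef, hBdef, Finset.mem_filter, Finset.mem_image, Finset.mem_univ,
      true_and] at hxa hxb
    obtain ⟨⟨⟨u, hu⟩, -⟩, hbiga⟩ := hxa
    obtain ⟨⟨⟨v, hv⟩, -⟩, hbigb⟩ := hxb
    have hne2 : (Fin.cons a u : Fin (n+1) → Fin k) ≠ Fin.cons b v := by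
      intro h
      exact hab (by simpa using congrFun h 0)
    obtain ⟨p, hp⟩ := exists_short_walk k (n+1) (Fin.cons a u) (Fin.cons b v)
    have := hc.2 _ _ hne2 (hu.trans hv.symm) p
    omega
  -- big colors are bounded by t and at least 2^(n+1)-1
  have hHsub : ∀ a, Hs a ⊆ Finset.Icc (2^(n+1) - 1) t := by
    intro a x hx
    simp only [hHdef, hBdef, Finset.mem_filter, Finset.mem_image, Finset.mem_univ,
      true_and] at hx
    obtain ⟨⟨⟨u, hu⟩, -⟩, hbig⟩ := hx
    have := (hc.1 (Fin.cons a u)).2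
    exact Finset.mem_Icc.2 ⟨by omega, by omega⟩
  have hsum : ∑ a : Fin k, (Hs a).card ≤ t + 1 - (2^(n+1) - 1) := by
    rw [← Finset.card_biUnion hdisj]
    have hsub : (Finset.univ.biUnion Hs) ⊆ Finset.Icc (2^(n+1) - 1) t := by
      intro x hx
      obtain ⟨a, -, hxa⟩ := Finset.mem_biUnion.1 hx
      exact hHsub a hxa
    have h1 := Finset.card_le_card hsub
    rw [Nat.card_Icc] at h1
    exact h1
  have htotal : k * (X + 2) ≤ k * (2^n + 2^n) + ∑ a : Fin k, (Hs a).card := by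
    calc k * (X + 2) = ∑ _a : Fin k, (X + 2) := by
          rw [Finset.sum_const, Finset.card_univ, Fintype.card_fin, smul_eq_mul]
      _ ≤ ∑ a : Fin k, (2^n + 2^n + (Hs a).card) :=
          Finset.sum_le_sum (fun a _ => by have h1 := hkey a; have h2 := hBcard a; omega)
      _ = k * (2^n + 2^n) + ∑ a : Fin k, (Hs a).card := by
          rw [Finset.sum_add_distrib, Finset.sum_const, Finset.card_univ, Fintype.card_fin,
            smul_eq_mul]
  -- final arithmetic
  have hcast : ((2:ℤ)) ^ (n+1) = ((2 ^ (n+1) : ℕ) : ℤ) := by push_cast; ring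
  rw [hcast]
  by_cases hcase : 2 ^ (n+1) ≤ t + 2
  · -- main case
    have hnat : k * (X + 2) + 2^(n+1) ≤ k * (2^n + 2^n) + t + 2 := by omega
    have hz : (k:ℤ) * ((X:ℤ) + 2) + 2^(n+1) ≤ (k:ℤ) * ((2:ℤ)^n + 2^n) + (t:ℤ) + 2 := by
      exact_mod_cast hnat
    push_cast
    nlinarith [hz]
  · -- degenerate case: X + 2 ≤ 2^(n+1)
    have hzero : ∑ a : Fin k, (Hs a).card = 0 := by omega
    have hmul : k * (X + 2) ≤ k * (2^n + 2^n) := by omega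
    have hle : X + 2 ≤ 2^n + 2^n := Nat.le_of_mul_le_mul_left hmul (by omega)
    have h2 : (X : ℤ) - (2^(n+1) : ℕ) + 2 ≤ 0 := by
      push_cast
      push_cast [hpow] at hle ⊢
      linarith
    have h3 : (0:ℤ) ≤ (k:ℤ) - 1 := by
      have : (2:ℤ) ≤ k := by exact_mod_cast hk
      linarith
    have h4 := mul_nonpos_of_nonneg_of_nonpos h3 h2
    have h5 : (X:ℤ) ≤ t := by exact_mod_cast hXt
    linarith
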